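/- Let γ, σ > 0, Λ(κ) := ( √(κ²+4) − κ ) / 2, and define the insider's ex-ante profit W(κ) := (γσ/2)·( κ·log(κΛ(κ)) + 2Λ(κ) ) for κ > 0. Then W is differentiable with W'(κ) = (γσ/2)·log(1 − Λ(κ)²) < 0, W is convex with W''(κ) = −γσ·Λ'(κ)/κ > 0, W is strictly decreasing, and W(κ) → 0 as κ → ∞. -/

import Mathlib

open Real Set Filter

noncomputable section

/-- `Λ(κ) = (√(κ²+4) − κ)/2`, the normalised Kyle lambda. -/
def Lam (κ : ℝ) : ℝ := (Real.sqrt (κ ^ 2 + 4) - κ) / 2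

/-- The insider's ex-ante profit `W(κ) = (γσ/2)(κ log(κΛ(κ)) + 2Λ(κ))`. -/
def Wprofit (γ σ κ : ℝ) : ℝ :=
  γ * σ / 2 * (κ * Real.log (κ * Lam κ) + 2 * Lam κ)

lemma sqrtpos (κ : ℝ) : 0 < Real.sqrt (κ ^ 2 + 4) := Real.sqrt_pos.2 (by positivity)

lemma lt_sqrt' (κ : ℝ) : κ < Real.sqrt (κ ^ 2 + 4) := by
  have h1 : Real.sqrt (κ ^ 2) < Real.sqrt (κ ^ 2 + 4) :=
    Real.sqrt_lt_sqrt (sq_nonneg κ) (by linarith)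
  have h2 : Real.sqrt (κ ^ 2) = |κ| := Real.sqrt_sq_eq_abs κ
  calc κ ≤ |κ| := le_abs_self κ
    _ < _ := by rw [← h2]; exact h1

lemma lam_pos (κ : ℝ) : 0 < Lam κ := by
  have := lt_sqrt' κ
  unfold Lam; linarith

lemma lam_id (κ : ℝ) : Lam κ ^ 2 + κ * Lam κ = 1 := by
  have hs : Real.sqrt (κ ^ 2 + 4) ^ 2 = κ ^ 2 + 4 := Real.sq_sqrt (by positivity)
  unfold Lam; nlinarith [hs]

lemma lam_lt_one {κ : ℝ} (hκ : 0 < κ) : Lam κ < 1 := by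
  have h := lam_id κ
  have hL := lam_pos κ
  nlinarith

lemma lam_hasDeriv (κ : ℝ) :
    HasDerivAt Lam (-(Lam κ) / Real.sqrt (κ ^ 2 + 4)) κ := by
  have hs := sqrtpos κ
  have h1 : HasDerivAt (fun x : ℝ => x ^ 2 + 4) (2 * κ) κ := by
    simpa using ((hasDerivAt_pow 2 κ).add_const 4)
  have h2 : HasDerivAt (fun x : ℝ => Real.sqrt (x ^ 2 + 4))
      (2 * κ / (2 * Real.sqrt (κ ^ 2 + 4))) κ := h1.sqrt (by positivity)
  have h3 : HasDerivAt Lam ((2 * κ / (2 * Real.sqrt (κ ^ 2 + 4)) - 1) / 2) κ :=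
    (h2.sub (hasDerivAt_id κ)).div_const 2
  convert h3 using 1
  have hs' : Real.sqrt (κ ^ 2 + 4) ≠ 0 := ne_of_gt hs
  unfold Lam
  field_simp
  ring

lemma W_hasDeriv (γ σ : ℝ) {κ : ℝ} (hκ : 0 < κ) :
    HasDerivAt (Wprofit γ σ) (γ * σ / 2 * Real.log (1 - Lam κ ^ 2)) κ := by
  have hs := sqrtpos κ
  have hL := lam_pos κ
  have hLd := lam_hasDeriv κ
  set s := Real.sqrt (κ ^ 2 + 4) with hsdef
  have hprod : HasDerivAt (fun x => x * Lam x) (1 * Lam κ + κ * (-(Lam κ) / s)) κ :=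
    (hasDerivAt_id κ).mul hLd
  have hne : κ * Lam κ ≠ 0 := by positivity
  have hlog := hprod.log hne
  have h1 := (hasDerivAt_id κ).mul hlog
  have h2 := (h1.add (hLd.const_mul 2)).const_mul (γ * σ / 2)
  have hW : HasDerivAt (Wprofit γ σ)
      (γ * σ / 2 * (1 * Real.log (κ * Lam κ) +
        κ * ((1 * Lam κ + κ * (-(Lam κ) / s)) / (κ * Lam κ)) + 2 * (-(Lam κ) / s))) κ := by
    exact h2
  convert hW using 1
  have hkl : κ * Lam κ = 1 - Lam κ ^ 2 := by have := lam_id κ; linarith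
  rw [← hkl]
  have h2L : 2 * Lam κ = s - κ := by unfold Lam; ring
  have hs' : s ≠ 0 := ne_of_gt hs
  have hL' : Lam κ ≠ 0 := ne_of_gt hL
  have hκ' : κ ≠ 0 := ne_of_gt hκ
  have key : κ * ((1 * Lam κ + κ * (-(Lam κ) / s)) / (κ * Lam κ)) + 2 * (-(Lam κ) / s) = 0 := by
    field_simp
    linear_combination (-1 : ℝ) * h2L
  linear_combination (-(γ * σ) / 2) * key

lemma W_deriv_eq (γ σ : ℝ) {κ : ℝ} (hκ : 0 < κ) :
    deriv (Wprofit γ σ) κ = γ * σ / 2 * Real.log (1 - Lam κ ^ 2) :=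
  (W_hasDeriv γ σ hκ).deriv

lemma one_sub_lam_sq {κ : ℝ} (hκ : 0 < κ) : 1 - Lam κ ^ 2 = κ * Lam κ := by
  have := lam_id κ; linarith

lemma W_deriv_neg (γ σ : ℝ) (hγ : 0 < γ) (hσ : 0 < σ) {κ : ℝ} (hκ : 0 < κ) :
    γ * σ / 2 * Real.log (1 - Lam κ ^ 2) < 0 := by
  have hL := lam_pos κ
  have hL1 := lam_lt_one hκ
  have h1 : 0 < 1 - Lam κ ^ 2 := by nlinarith
  have h2 : 1 - Lam κ ^ 2 < 1 := by nlinarith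
  have := Real.log_neg h1 h2
  have hgs : 0 < γ * σ / 2 := by positivity
  exact mul_neg_of_pos_of_neg hgs this

lemma W_deriv2 (γ σ : ℝ) {κ : ℝ} (hκ : 0 < κ) :
    HasDerivAt (deriv (Wprofit γ σ)) (-(γ * σ * deriv Lam κ) / κ) κ := by
  have hs := sqrtpos κ
  have hL := lam_pos κ
  have hLd := lam_hasDeriv κ
  set s := Real.sqrt (κ ^ 2 + 4) with hsdef
  have hkl := one_sub_lam_sq hκ
  have hne : 1 - Lam κ ^ 2 ≠ 0 := by rw [hkl]; positivity
  have hsq : HasDerivAt (fun x => 1 - Lam x ^ 2)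
      (-(2 * Lam κ * (-(Lam κ) / s))) κ := by
    simpa using (((hLd.pow 2).const_sub 1))
  have hlog := hsq.log hne
  have hg : HasDerivAt (fun x => γ * σ / 2 * Real.log (1 - Lam x ^ 2))
      (γ * σ / 2 * (-(2 * Lam κ * (-(Lam κ) / s)) / (1 - Lam κ ^ 2))) κ :=
    hlog.const_mul _
  have heq : deriv (Wprofit γ σ) =ᶠ[nhds κ]
      (fun x => γ * σ / 2 * Real.log (1 - Lam x ^ 2)) := by
    filter_upwards [Ioi_mem_nhds hκ] with x hx
    exact W_deriv_eq γ σ hx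
  have hmain := hg.congr_of_eventuallyEq heq
  refine hmain.congr_deriv ?_
  rw [hLd.deriv, hkl]
  have hs' : s ≠ 0 := ne_of_gt hs
  have hL' : Lam κ ≠ 0 := ne_of_gt hL
  have hκ' : κ ≠ 0 := ne_of_gt hκ
  field_simp

lemma W_deriv2_pos (γ σ : ℝ) (hγ : 0 < γ) (hσ : 0 < σ) {κ : ℝ} (hκ : 0 < κ) :
    0 < -(γ * σ * deriv Lam κ) / κ := by
  have hs := sqrtpos κ
  have hL := lam_pos κ
  rw [(lam_hasDeriv κ).deriv]
  have h1 : 0 < -(γ * σ * (-(Lam κ) / Real.sqrt (κ ^ 2 + 4))) := by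
    have : γ * σ * (-(Lam κ) / Real.sqrt (κ ^ 2 + 4)) < 0 := by
      apply mul_neg_of_pos_of_neg (by positivity)
      exact div_neg_of_neg_of_pos (by linarith) hs
    linarith
  positivity

/-- `W` is differentiable with `W'(κ) = (γσ/2) log(1 − Λ(κ)²) < 0`, convex with
`W''(κ) = −γσΛ'(κ)/κ > 0`, strictly decreasing on `(0,∞)`, and `W(κ) → 0` as `κ → ∞`. -/
theorem stmt17 (γ σ : ℝ) (hγ : 0 < γ) (hσ : 0 < σ) :
    (∀ κ : ℝ, 0 < κ →
      HasDerivAt (Wprofit γ σ) (γ * σ / 2 * Real.log (1 - Lam κ ^ 2)) κ ∧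
      γ * σ / 2 * Real.log (1 - Lam κ ^ 2) < 0) ∧
    (∀ κ : ℝ, 0 < κ →
      HasDerivAt (deriv (Wprofit γ σ)) (-(γ * σ * deriv Lam κ) / κ) κ ∧
      0 < -(γ * σ * deriv Lam κ) / κ) ∧
    ConvexOn ℝ (Set.Ioi 0) (Wprofit γ σ) ∧
    StrictAntiOn (Wprofit γ σ) (Set.Ioi 0) ∧
    Filter.Tendsto (Wprofit γ σ) Filter.atTop (nhds 0) := by
  have hcont : ContinuousOn (Wprofit γ σ) (Set.Ioi 0) := fun x hx =>
    ((W_hasDeriv γ σ (mem_Ioi.1 hx)).differentiableAt.continuousAt).continuousWithinAt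
  have hint : interior (Set.Ioi (0:ℝ)) = Set.Ioi 0 := interior_Ioi
  refine ⟨fun κ hκ => ⟨W_hasDeriv γ σ hκ, W_deriv_neg γ σ hγ hσ hκ⟩,
    fun κ hκ => ⟨W_deriv2 γ σ hκ, W_deriv2_pos γ σ hγ hσ hκ⟩, ?_, ?_, ?_⟩
  · apply convexOn_of_deriv2_nonneg (convex_Ioi 0) hcont
    · rw [hint]
      exact fun x hx => ((W_hasDeriv γ σ (mem_Ioi.1 hx)).differentiableAt).differentiableWithinAt
    · rw [hint]
      exact fun x hx => ((W_deriv2 γ σ (mem_Ioi.1 hx)).differentiableAt).differentiableWithinAt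
    · rw [hint]
      intro x hx
      have h1 : deriv^[2] (Wprofit γ σ) x = deriv (deriv (Wprofit γ σ)) x := by
        simp [Function.iterate_succ, Function.iterate_one]
      rw [h1, (W_deriv2 γ σ (mem_Ioi.1 hx)).deriv]
      exact le_of_lt (W_deriv2_pos γ σ hγ hσ (mem_Ioi.1 hx))
  · apply strictAntiOn_of_deriv_neg (convex_Ioi 0) hcont
    rw [hint]
    intro x hx
    rw [W_deriv_eq γ σ (mem_Ioi.1 hx)]
    exact W_deriv_neg γ σ hγ hσ (mem_Ioi.1 hx)
  · -- limit at infinity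
    have hub : ∀ κ : ℝ, 0 < κ → 0 ≤ Wprofit γ σ κ ∧ Wprofit γ σ κ ≤ γ * σ / κ := by
      intro κ hκ
      have hL := lam_pos κ
      have hL1 := lam_lt_one hκ
      have hkl := one_sub_lam_sq hκ
      have hklpos : 0 < κ * Lam κ := by positivity
      -- upper bound on log term : log(κΛ) ≤ 0
      have hlogle : Real.log (κ * Lam κ) ≤ 0 := by
        apply Real.log_nonpos (le_of_lt hklpos)
        nlinarith [lam_id κ, sq_nonneg (Lam κ)]
      -- lower bound: log(κΛ) ≥ 1 - 1/(κΛ)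
      have hlogge : 1 - 1 / (κ * Lam κ) ≤ Real.log (κ * Lam κ) := by
        have h := Real.log_le_sub_one_of_pos (show (0:ℝ) < 1 / (κ * Lam κ) by positivity)
        rw [Real.log_div one_ne_zero (ne_of_gt hklpos), Real.log_one] at h
        linarith
      have hineq : -(Lam κ) ≤ κ * Real.log (κ * Lam κ) := by
        have h1 : κ * (1 - 1 / (κ * Lam κ)) ≤ κ * Real.log (κ * Lam κ) :=
          mul_le_mul_of_nonneg_left hlogge (le_of_lt hκ)
        have h2 : κ * (1 - 1 / (κ * Lam κ)) = -(Lam κ) := by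
          have hid := lam_id κ
          field_simp
          linear_combination hid
        linarith
      have hineq2 : κ * Real.log (κ * Lam κ) ≤ 0 :=
        mul_nonpos_of_nonneg_of_nonpos (le_of_lt hκ) hlogle
      have hLle : Lam κ ≤ 1 / κ := by
        rw [le_div_iff₀ hκ]
        nlinarith [lam_id κ, sq_nonneg (Lam κ)]
      constructor
      · unfold Wprofit
        have : 0 ≤ κ * Real.log (κ * Lam κ) + 2 * Lam κ := by linarith
        positivity
      · unfold Wprofit
        have h3 : κ * Real.log (κ * Lam κ) + 2 * Lam κ ≤ 2 / κ := by
          have : Lam κ ≤ 1 / κ := hLle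
          have h4 : 2 * Lam κ ≤ 2 / κ := by
            rw [le_div_iff₀ hκ]
            nlinarith [lam_id κ, sq_nonneg (Lam κ)]
          linarith
        have hgs : 0 ≤ γ * σ / 2 := by positivity
        calc γ * σ / 2 * (κ * Real.log (κ * Lam κ) + 2 * Lam κ)
            ≤ γ * σ / 2 * (2 / κ) := mul_le_mul_of_nonneg_left h3 hgs
          _ = γ * σ / κ := by field_simp
    have htend : Filter.Tendsto (fun κ : ℝ => γ * σ / κ) Filter.atTop (nhds 0) :=
      Filter.Tendsto.div_atTop tendsto_const_nhds Filter.tendsto_id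
    apply squeeze_zero' ?_ ?_ htend
    · filter_upwards [Filter.eventually_gt_atTop 0] with κ hκ
      exact (hub κ hκ).1
    · filter_upwards [Filter.eventually_gt_atTop 0] with κ hκ
      exact (hub κ hκ).2

end
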